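/- Let A be a bounded self-adjoint operator on a complex Hilbert space H, h ∈ H, and μ(R) = ⟨E(R)h, h⟩. If x ∈ ℝ is such that the symmetric derivative μ'(x) = lim_{h→0} μ((x, x+h])/h exists and is strictly positive, then ‖(A - x - iε)⁻¹ h‖ → ∞ as ε → 0⁺. -/

import Mathlib

open scoped InnerProductSpace
open MeasureTheory Filter Topology
open scoped ENNReal

/-- A projection-valued spectral measure for the bounded self-adjoint operator `A` on a complex
Hilbert space: a family of commuting orthogonal projections, multiplicative and countably
additive in the strong topology, with `E(univ) = I`, compactly supported, commuting with `A`,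
and whose diagonal scalar measures have moments reproducing those of `A`. -/
structure IsSpectralMeasure {H : Type*} [NormedAddCommGroup H] [InnerProductSpace ℂ H]
    [CompleteSpace H] (A : H →L[ℂ] H) (E : Set ℝ → H →L[ℂ] H) : Prop where
  selfAdjoint : ∀ R : Set ℝ, IsSelfAdjoint (E R)
  idem : ∀ R : Set ℝ, E R ∘L E R = E R
  univ : E Set.univ = 1
  inter : ∀ R₁ R₂ : Set ℝ, E R₁ ∘L E R₂ = E (R₁ ∩ R₂)
  commutes : ∀ R : Set ℝ, A ∘L E R = E R ∘L A
  countablyAdditive : ∀ f : ℕ → Set ℝ, (∀ n, MeasurableSet (f n)) →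
    Pairwise (Function.onFun Disjoint f) → ∀ v : H,
      HasSum (fun n => E (f n) v) (E (⋃ n, f n) v)
  compactSupport : ∃ s : Set ℝ, IsCompact s ∧ E sᶜ = 0
  moment : ∀ v : H, ∀ μ : MeasureTheory.Measure ℝ,
      (∀ R : Set ℝ, MeasurableSet R → ((μ R).toReal : ℂ) = ⟪v, E R v⟫_ℂ) →
      ∀ n : ℕ, ⟪v, (A ^ n) v⟫_ℂ = ∫ t : ℝ, (t : ℂ) ^ n ∂μ

section Aux
variable {H : Type*} [NormedAddCommGroup H] [InnerProductSpace ℂ H] [CompleteSpace H]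
  {A : H →L[ℂ] H} {E : Set ℝ → H →L[ℂ] H}

lemma sm_empty (hE : IsSpectralMeasure A E) : E ∅ = 0 := by
  ext v
  have h := hE.countablyAdditive (fun _ => (∅ : Set ℝ)) (fun _ => MeasurableSet.empty)
    (fun i j _ => by simp [Function.onFun]) v
  simp only [Set.iUnion_empty] at h
  have h0 : E (∅ : Set ℝ) v = 0 := (summable_const_iff (E (∅:Set ℝ) v)).mp h.summable
  simpa using h0

lemma sm_inner_self (hE : IsSpectralMeasure A E) (R : Set ℝ) (v : H) :
    ⟪v, E R v⟫_ℂ = ((‖E R v‖ : ℂ)) ^ 2 := by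
  have h1 : E R v = E R (E R v) := by
    conv_lhs => rw [← hE.idem R]
    rfl
  calc ⟪v, E R v⟫_ℂ = ⟪v, E R (E R v)⟫_ℂ := by rw [← h1]
    _ = ⟪E R v, E R v⟫_ℂ := ((hE.selfAdjoint R).isSymmetric v (E R v)).symm
    _ = ((‖E R v‖ : ℂ)) ^ 2 := inner_self_eq_norm_sq_to_K _

lemma sm_exists_measure (hE : IsSpectralMeasure A E) (v : H) :
    ∃ ν : Measure ℝ, IsFiniteMeasure ν ∧
      ∀ R : Set ℝ, MeasurableSet R → ν R = ENNReal.ofReal (‖E R v‖ ^ 2) := by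
  set m : ∀ s : Set ℝ, MeasurableSet s → ℝ≥0∞ :=
    fun R _ => ENNReal.ofReal (‖E R v‖ ^ 2) with hm
  have m0 : m ∅ MeasurableSet.empty = 0 := by simp [hm, sm_empty hE]
  have mU : ∀ ⦃f : ℕ → Set ℝ⦄ (h : ∀ i, MeasurableSet (f i)),
      Pairwise (Function.onFun Disjoint f) →
      m (⋃ i, f i) (MeasurableSet.iUnion h) = ∑' i, m (f i) (h i) := by
    intro f hf hd
    have hs : HasSum (fun n => E (f n) v) (E (⋃ n, f n) v) := hE.countablyAdditive f hf hd v
    have hs2 : HasSum (fun n => ⟪v, E (f n) v⟫_ℂ) ⟪v, E (⋃ n, f n) v⟫_ℂ :=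
      (innerSL ℂ v).hasSum hs
    have hs3 : HasSum (fun n => (‖E (f n) v‖ : ℝ) ^ 2) (‖E (⋃ n, f n) v‖ ^ 2) := by
      have := Complex.reCLM.hasSum hs2
      simp only [sm_inner_self hE] at this
      simpa [← Complex.ofReal_pow] using this
    simp only [hm]
    rw [← hs3.tsum_eq, ENNReal.ofReal_tsum_of_nonneg (fun n => sq_nonneg _) hs3.summable]
  refine ⟨Measure.ofMeasurable m m0 mU, ?_, ?_⟩
  · constructor
    rw [Measure.ofMeasurable_apply _ MeasurableSet.univ]
    exact ENNReal.ofReal_lt_top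
  · intro R hR
    exact Measure.ofMeasurable_apply R hR
end Aux

section Key
variable {H : Type*} [NormedAddCommGroup H] [InnerProductSpace ℂ H] [CompleteSpace H]

lemma key_ineq (A : H →L[ℂ] H) (hA : IsSelfAdjoint A)
    (E : Set ℝ → H →L[ℂ] H) (hE : IsSpectralMeasure A E) (h : H)
    (μ : Measure ℝ)
    (hμ : ∀ R : Set ℝ, MeasurableSet R → ((μ R).toReal : ℂ) = ⟪h, E R h⟫_ℂ)
    (x ε : ℝ) (hε : 0 < ε) :
    (μ (Set.Ioc x (x + ε))).toReal ≤
      2 * ε ^ 2 *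
        ‖Ring.inverse (A - (((x : ℂ) + (ε : ℂ) * Complex.I)) • (1 : H →L[ℂ] H)) h‖ ^ 2 := by
  set z : ℂ := (x : ℂ) + (ε : ℂ) * Complex.I with hzdef
  have hzre : z.re = x := by simp [hzdef]
  have hzim : z.im = ε := by simp [hzdef]
  -- A - z•1 is a unit
  have hz_spec : z ∉ spectrum ℂ A := by
    intro hs
    have := hA.mem_spectrum_eq_re hs
    have : z.im = 0 := by rw [this]; simp
    rw [hzim] at this; exact hε.ne' this
  have hunit : IsUnit (A - z • (1 : H →L[ℂ] H)) := by
    have h1 : IsUnit (algebraMap ℂ (H →L[ℂ] H) z - A) := spectrum.notMem_iff.mp hz_spec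
    have h2 : algebraMap ℂ (H →L[ℂ] H) z = z • (1 : H →L[ℂ] H) :=
      Algebra.algebraMap_eq_smul_one z
    rw [h2] at h1
    simpa [neg_sub] using h1.neg
  set u : H := Ring.inverse (A - z • (1 : H →L[ℂ] H)) h with hudef
  have hu : (A - z • (1 : H →L[ℂ] H)) u = h := by
    have := Ring.mul_inverse_cancel _ hunit
    calc (A - z • (1 : H →L[ℂ] H)) u
        = ((A - z • (1 : H →L[ℂ] H)) * Ring.inverse (A - z • (1 : H →L[ℂ] H))) h := rfl
      _ = h := by rw [this]; rfl
  set S : Set ℝ := Set.Ioc x (x + ε) with hSdef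
  have hS : MeasurableSet S := measurableSet_Ioc
  set v : H := E S u with hvdef
  obtain ⟨ν, hfin, hν⟩ := sm_exists_measure hE v
  haveI := hfin
  have hcond : ∀ R : Set ℝ, MeasurableSet R → ((ν R).toReal : ℂ) = ⟪v, E R v⟫_ℂ := by
    intro R hR
    rw [hν R hR, ENNReal.toReal_ofReal (sq_nonneg _), sm_inner_self hE]
    push_cast; ring
  -- ν is supported on S
  have hvS : ∀ R : Set ℝ, E R v = E (R ∩ S) u := by
    intro R
    rw [hvdef, ← ContinuousLinearMap.comp_apply, hE.inter]
  have hSc : ν Sᶜ = 0 := by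
    rw [hν Sᶜ hS.compl, hvS, Set.compl_inter_self, sm_empty hE]
    simp
  have haeS : ∀ᵐ t ∂ν, t ∈ S := by
    rw [ae_iff]
    exact hSc
  -- integrability
  have hint : ∀ g : ℝ → ℝ, Continuous g → Integrable g ν := by
    intro g hg
    obtain ⟨C, hC⟩ := isCompact_Icc.exists_bound_of_continuousOn (s := Set.Icc x (x + ε))
      hg.continuousOn
    exact (integrable_const C).mono' hg.aestronglyMeasurable
      (haeS.mono fun t ht => hC t (Set.Ioc_subset_Icc_self ht))
  have hintt : Integrable (fun t : ℝ => t) ν := hint _ continuous_id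
  have hintt2 : Integrable (fun t : ℝ => t ^ 2) ν := hint _ (continuous_pow 2)
  -- moments
  have hm := hE.moment v ν hcond
  set I1 : ℝ := ∫ t, t ∂ν with hI1
  set I2 : ℝ := ∫ t, t ^ 2 ∂ν with hI2
  have h1 : ⟪v, A v⟫_ℂ = (I1 : ℂ) := by
    have := hm 1
    simp only [pow_one] at this
    rw [this, hI1]
    rw [show (fun t : ℝ => (t : ℂ)) = (fun t : ℝ => ((t : ℝ) : ℂ)) from rfl]
    exact integral_ofReal (f := fun t : ℝ => t) (𝕜 := ℂ)
  have h2 : ⟪v, A (A v)⟫_ℂ = (I2 : ℂ) := by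
    have := hm 2
    have hApow : (A ^ 2) v = A (A v) := by
      rw [pow_two]; rfl
    rw [hApow] at this
    rw [this, hI2]
    rw [show (fun t : ℝ => (t : ℂ) ^ 2) = (fun t : ℝ => ((t ^ 2 : ℝ) : ℂ)) by push_cast; rfl]
    exact integral_ofReal (f := fun t : ℝ => t ^ 2) (𝕜 := ℂ)
  have hI0 : (ν Set.univ).toReal = ‖v‖ ^ 2 := by
    rw [hν Set.univ MeasurableSet.univ, ENNReal.toReal_ofReal (sq_nonneg _), hE.univ]
    rfl
  -- norm computation
  set w : H := A v - z • v with hwdef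
  have hwv : (A - z • (1 : H →L[ℂ] H)) v = w := by
    simp [hwdef]
  have e0 : ⟪A v, A v⟫_ℂ = (I2 : ℂ) := (hA.isSymmetric v (A v)).trans h2
  have e1 : ⟪A v, v⟫_ℂ = (I1 : ℂ) := (hA.isSymmetric v v).trans h1
  have hip : ((‖w‖ ^ 2 : ℝ) : ℂ) = (I2 : ℂ) - z * (I1 : ℂ) - (starRingEnd ℂ) z * (I1 : ℂ)
      + (starRingEnd ℂ) z * z * ((‖v‖ ^ 2 : ℝ) : ℂ) := by
    have hl : ((‖w‖ ^ 2 : ℝ) : ℂ) = ⟪w, w⟫_ℂ := by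
      rw [inner_self_eq_norm_sq_to_K]; norm_cast
    rw [hl, hwdef, inner_sub_sub_self, inner_smul_right, inner_smul_left, inner_smul_left,
      inner_smul_right, e0, e1, h1, inner_self_eq_norm_sq_to_K]
    simp only [hzdef, map_add, map_mul, Complex.conj_ofReal, Complex.conj_I]
    push_cast
    ring_nf
    simp only [Complex.I_sq]
    push_cast
    norm_num [mul_comm]
  have hnw : ‖w‖ ^ 2 = I2 - 2 * x * I1 + (x ^ 2 + ε ^ 2) * ‖v‖ ^ 2 := by
    have h3 := congrArg Complex.re hip
    simp only [Complex.ofReal_re, Complex.sub_re, Complex.add_re, Complex.mul_re,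
      Complex.ofReal_im, Complex.conj_re, Complex.conj_im, hzre, hzim] at h3
    linear_combination h3
  have hintLHS : Integrable (fun t : ℝ => (t - x) ^ 2 + ε ^ 2) ν :=
    hint _ (((continuous_id.sub continuous_const).pow 2).add continuous_const)
  have hsum : ∫ t, ((t - x) ^ 2 + ε ^ 2) ∂ν = I2 - 2 * x * I1 + (x ^ 2 + ε ^ 2) * ‖v‖ ^ 2 := by
    have hfe : (fun t : ℝ => (t - x) ^ 2 + ε ^ 2)
        = fun t : ℝ => (t ^ 2 - (2 * x) * t) + (x ^ 2 + ε ^ 2) := by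
      funext t; ring
    have ia : Integrable (fun t : ℝ => t ^ 2 - 2 * x * t) ν :=
      hint _ ((continuous_pow 2).sub (continuous_const.mul continuous_id))
    have ib : Integrable (fun t : ℝ => 2 * x * t) ν :=
      hint _ (continuous_const.mul continuous_id)
    rw [hfe, integral_add ia (integrable_const _), integral_sub hintt2 ib,
      integral_const_mul, integral_const, smul_eq_mul, measureReal_def, hI0, ← hI1, ← hI2]
    ring
  have hmono : ∫ t, ((t - x) ^ 2 + ε ^ 2) ∂ν ≤ ∫ _ : ℝ, 2 * ε ^ 2 ∂ν := by
    refine integral_mono_ae hintLHS (integrable_const _) (haeS.mono ?_)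
    intro t ht
    dsimp only
    have ht1 : 0 < t - x := sub_pos.mpr ht.1
    have ht2 : t - x ≤ ε := by have := ht.2; simp only [hSdef] at *; linarith
    nlinarith [mul_self_le_mul_self ht1.le ht2]
  have hconst : ∫ _ : ℝ, 2 * ε ^ 2 ∂ν = 2 * ε ^ 2 * ‖v‖ ^ 2 := by
    rw [integral_const, smul_eq_mul, measureReal_def, hI0]; ring
  have hwle : ‖w‖ ^ 2 ≤ 2 * ε ^ 2 * ‖v‖ ^ 2 := by
    rw [hnw, ← hsum]; rw [hconst] at hmono; exact hmono
  have hvle : ‖v‖ ≤ ‖u‖ := by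
    have hEvu : ⟪u, E S u⟫_ℂ = ((‖v‖ : ℂ)) ^ 2 := sm_inner_self hE S u
    have h2' : ‖v‖ ^ 2 ≤ ‖u‖ * ‖v‖ := by
      calc ‖v‖ ^ 2 = ‖⟪u, E S u⟫_ℂ‖ := by
            rw [hEvu, norm_pow]; simp [Complex.norm_real]
        _ ≤ ‖u‖ * ‖E S u‖ := norm_inner_le_norm u _
        _ = ‖u‖ * ‖v‖ := rfl
    rcases (norm_nonneg v).eq_or_lt with hv | hv
    · linarith [norm_nonneg u]
    · nlinarith [h2', hv]
  have hESh : E S h = w := by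
    have hcomm : E S ∘L (A - z • (1 : H →L[ℂ] H)) = (A - z • 1) ∘L E S := by
      rw [ContinuousLinearMap.comp_sub, ContinuousLinearMap.sub_comp, ← hE.commutes S]
      congr 1
      simp [ContinuousLinearMap.one_def]
    calc E S h = E S ((A - z • 1) u) := by rw [hu]
      _ = (E S ∘L (A - z • (1 : H →L[ℂ] H))) u := rfl
      _ = ((A - z • 1) ∘L E S) u := by rw [hcomm]
      _ = (A - z • (1 : H →L[ℂ] H)) v := rfl
      _ = w := hwv
  have hμS : (μ S).toReal = ‖E S h‖ ^ 2 := by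
    have hh := hμ S hS
    rw [sm_inner_self hE] at hh
    exact_mod_cast hh
  have : (μ S).toReal ≤ 2 * ε ^ 2 * ‖u‖ ^ 2 := by
    rw [hμS, hESh]
    nlinarith [mul_self_le_mul_self (norm_nonneg v) hvle, sq_nonneg ε, hwle]
  exact this
end Key


/-- Let `A` be bounded self-adjoint, `h ∈ H`, and `μ(R) = ⟨E(R)h,h⟩` the
associated scalar spectral measure. If the symmetric derivative
`μ'(x) = lim_{d→0} μ((x, x+d])/d` exists and is strictly positive, then
`‖(A - x - iε)⁻¹ h‖ → ∞` as `ε → 0⁺`. -/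
theorem stmt6 {H : Type*} [NormedAddCommGroup H] [InnerProductSpace ℂ H] [CompleteSpace H]
    (A : H →L[ℂ] H) (hA : IsSelfAdjoint A)
    (E : Set ℝ → H →L[ℂ] H) (hE : IsSpectralMeasure A E) (h : H)
    (μ : Measure ℝ) [IsFiniteMeasure μ]
    (hμ : ∀ R : Set ℝ, MeasurableSet R → ((μ R).toReal : ℂ) = ⟪h, E R h⟫_ℂ)
    (x : ℝ) (L : ℝ) (hL : 0 < L)
    (hderiv : Tendsto
        (fun d : ℝ =>
          (μ (if 0 ≤ d then Set.Ioc x (x + d) else Set.Ioc (x + d) x)).toReal / |d|)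
        (𝓝[≠] 0) (𝓝 L)) :
    Tendsto
      (fun ε : ℝ =>
        ‖Ring.inverse (A - (((x : ℂ) + (ε : ℂ) * Complex.I)) • (1 : H →L[ℂ] H)) h‖)
      (𝓝[>] 0) atTop := by
  set g : ℝ → ℝ := fun ε =>
    ‖Ring.inverse (A - (((x : ℂ) + (ε : ℂ) * Complex.I)) • (1 : H →L[ℂ] H)) h‖ with hg
  have key : ∀ ε : ℝ, 0 < ε → (μ (Set.Ioc x (x + ε))).toReal ≤ 2 * ε ^ 2 * g ε ^ 2 :=
    fun ε hε => key_ineq A hA E hE h μ hμ x ε hε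
  -- the derivative limit along 𝓝[>] 0
  have hfrac : Tendsto (fun ε : ℝ => (μ (Set.Ioc x (x + ε))).toReal / ε) (𝓝[>] 0) (𝓝 L) := by
    have hmono : (𝓝[>] (0:ℝ)) ≤ 𝓝[≠] 0 := nhdsWithin_mono _ fun t ht => ne_of_gt ht
    refine (hderiv.mono_left hmono).congr' ?_
    filter_upwards [self_mem_nhdsWithin] with ε (hε : ε ∈ Set.Ioi (0:ℝ))
    rw [if_pos (le_of_lt hε), abs_of_pos hε]
  have hev : ∀ᶠ ε in 𝓝[>] (0:ℝ), L / 2 ≤ (μ (Set.Ioc x (x + ε))).toReal / ε :=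
    hfrac.eventually_const_le (by linarith)
  rw [tendsto_atTop]
  intro C
  have hinv : ∀ᶠ ε in 𝓝[>] (0:ℝ), (4 / L) * C ^ 2 ≤ ε⁻¹ :=
    tendsto_inv_nhdsGT_zero.eventually_ge_atTop _
  filter_upwards [hev, hinv, self_mem_nhdsWithin] with ε h1 h2 (hε : ε ∈ Set.Ioi (0:ℝ))
  have hε' : (0:ℝ) < ε := hε
  have hkey := key ε hε'
  -- (μ S).toReal ≥ (L/2) * ε
  have hμS : (L / 2) * ε ≤ (μ (Set.Ioc x (x + ε))).toReal := by
    calc (L / 2) * ε ≤ ((μ (Set.Ioc x (x + ε))).toReal / ε) * ε :=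
          mul_le_mul_of_nonneg_right h1 hε'.le
      _ = (μ (Set.Ioc x (x + ε))).toReal := by field_simp
  -- hence g ε ^ 2 ≥ L / (4 ε)
  have hg2 : C ^ 2 ≤ g ε ^ 2 := by
    have h3 : (L / 2) * ε ≤ 2 * ε ^ 2 * g ε ^ 2 := le_trans hμS hkey
    have h4 : (4 / L) * C ^ 2 ≤ ε⁻¹ := h2
    have hL4 : 0 < 4 / L := by positivity
    -- from h4 : C^2 ≤ (L/4) * ε⁻¹
    have h5 : C ^ 2 ≤ (L / 4) * ε⁻¹ := by
      calc C ^ 2 = (L / 4) * ((4 / L) * C ^ 2) := by field_simp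
        _ ≤ (L / 4) * ε⁻¹ := by
            apply mul_le_mul_of_nonneg_left h4 (by positivity)
    have h6 : (L / 4) * ε⁻¹ ≤ g ε ^ 2 := by
      rw [← sub_nonneg]
      have hε2 : 0 < ε ^ 2 := by positivity
      have h7 : (L / 2) * ε / (2 * ε ^ 2) ≤ g ε ^ 2 := by
        rw [div_le_iff₀ (by positivity)]
        calc (L / 2) * ε ≤ 2 * ε ^ 2 * g ε ^ 2 := h3
          _ = g ε ^ 2 * (2 * ε ^ 2) := by ring
      have h8 : (L / 2) * ε / (2 * ε ^ 2) = (L / 4) * ε⁻¹ := by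
        field_simp; ring
      linarith [h8 ▸ h7]
    linarith
  rcases le_or_gt C 0 with hC | hC
  · exact le_trans hC (norm_nonneg _)
  · nlinarith [norm_nonneg (Ring.inverse (A - (((x : ℂ) + (ε : ℂ) * Complex.I)) • (1 : H →L[ℂ] H)) h), hg2]
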